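/- Let p be a prime and r ≥ 1. With F(x,y) = x₁y₁² + x₂y₂² + x₃y₃² and S_q(m,n) the complete exponential sum, one has S_{p^r}(0,0) = p^{4r + 3⌊r/2⌋}·(1 − 1/p). -/

import Mathlib

/-- e_q(t) = exp(2πit/q). -/
noncomputable def eChar (q : ℕ) (t : ℤ) : ℂ :=
  Complex.exp (2 * Real.pi * Complex.I * (t : ℂ) / (q : ℂ))

/-- The complete exponential sum S_q(m,n) for F(x,y) = x₁y₁² + x₂y₂² + x₃y₃²:
S_q(m,n) = Σ*_{a mod q} Σ_{x,y mod q} e_q(aF(x,y) + m·x + n·y). -/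
noncomputable def expSum (q : ℕ) (m₁ m₂ m₃ n₁ n₂ n₃ : ℤ) : ℂ :=
  ∑ a ∈ (Finset.range q).filter (fun a => Nat.Coprime a q),
    ∑ x₁ ∈ Finset.range q, ∑ x₂ ∈ Finset.range q, ∑ x₃ ∈ Finset.range q,
      ∑ y₁ ∈ Finset.range q, ∑ y₂ ∈ Finset.range q, ∑ y₃ ∈ Finset.range q,
        eChar q ((a : ℤ) * ((x₁ : ℤ) * (y₁ : ℤ) ^ 2 + (x₂ : ℤ) * (y₂ : ℤ) ^ 2
            + (x₃ : ℤ) * (y₃ : ℤ) ^ 2)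
          + m₁ * (x₁ : ℤ) + m₂ * (x₂ : ℤ) + m₃ * (x₃ : ℤ)
          + n₁ * (y₁ : ℤ) + n₂ * (y₂ : ℤ) + n₃ * (y₃ : ℤ))

lemma echar_add (q : ℕ) (hq : (q:ℂ) ≠ 0) (s t : ℤ) :
    eChar q (s + t) = eChar q s * eChar q t := by
  unfold eChar
  rw [← Complex.exp_add]
  congr 1
  push_cast
  field_simp

lemma echar_geom (q : ℕ) (hq : 0 < q) (c : ℤ) :
    ∑ x ∈ Finset.range q, eChar q (c * x) = if (q:ℤ) ∣ c then (q:ℂ) else 0 := by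
  have hqC : (q:ℂ) ≠ 0 := Nat.cast_ne_zero.mpr hq.ne'
  have h2πI : (2 * (Real.pi:ℂ) * Complex.I) ≠ 0 := by
    simp [Real.pi_ne_zero, Complex.I_ne_zero, Complex.ofReal_ne_zero]
  have hpow : ∀ x : ℕ, eChar q (c * x) = (eChar q c) ^ x := by
    intro x
    unfold eChar
    rw [← Complex.exp_nat_mul]
    congr 1
    push_cast
    ring
  simp only [hpow]
  by_cases hdvd : (q:ℤ) ∣ c
  · rw [if_pos hdvd]
    obtain ⟨k, hk⟩ := hdvd
    have h1 : eChar q c = 1 := by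
      unfold eChar
      rw [hk]
      have : 2 * (Real.pi:ℂ) * Complex.I * ((q:ℤ) * k : ℤ) / q = k * (2 * Real.pi * Complex.I) := by
        push_cast; field_simp
      rw [this, Complex.exp_int_mul_two_pi_mul_I]
    simp [h1]
  · rw [if_neg hdvd]
    have h1 : eChar q c ≠ 1 := by
      intro h
      unfold eChar at h
      rw [Complex.exp_eq_one_iff] at h
      obtain ⟨n, hn⟩ := h
      apply hdvd
      have key : (2*(Real.pi:ℂ)*Complex.I) * c = (2*(Real.pi:ℂ)*Complex.I) * (n * q) := by
        field_simp at hn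
        linear_combination (2*(Real.pi:ℂ)*Complex.I) * hn
      have hc : (c:ℂ) = n * q := mul_left_cancel₀ h2πI key
      have hc' : c = n * q := by exact_mod_cast hc
      exact ⟨n, by linarith⟩
    rw [geom_sum_eq h1]
    have hq1 : (eChar q c) ^ q = 1 := by
      unfold eChar
      rw [← Complex.exp_nat_mul]
      have : (q:ℂ) * (2 * Real.pi * Complex.I * c / q) = c * (2 * Real.pi * Complex.I) := by
        field_simp
      rw [this, Complex.exp_int_mul_two_pi_mul_I]
    rw [hq1]
    simp


lemma count_lemma (p : ℕ) (hp : p.Prime) (r : ℕ) :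
    ((Finset.range (p^r)).filter (fun (y : ℕ) => ((p:ℤ))^r ∣ (y:ℤ)^2)).card = p^(r/2) := by
  have hp1 : 1 < p := hp.one_lt
  set s := r - r/2 with hs
  have hiff : ∀ y : ℕ, ((p:ℤ))^r ∣ (y:ℤ)^2 ↔ p^s ∣ y := by
    intro y
    have h1 : ((p:ℤ))^r ∣ (y:ℤ)^2 ↔ p^r ∣ y^2 := by
      rw [show ((p:ℤ))^r = ((p^r : ℕ) : ℤ) by push_cast; ring,
          show ((y:ℤ))^2 = ((y^2 : ℕ) : ℤ) by push_cast; ring, Int.natCast_dvd_natCast]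
    rw [h1]
    rcases Nat.eq_zero_or_pos y with hy | hy
    · subst hy; simp [dvd_pow_self, Nat.pos_of_ne_zero]
    · rw [Nat.Prime.pow_dvd_iff_le_factorization hp (by positivity),
          Nat.Prime.pow_dvd_iff_le_factorization hp (by omega),
          Nat.factorization_pow]
      simp only [Finsupp.smul_apply, smul_eq_mul]
      omega
  have heq : (Finset.range (p^r)).filter (fun (y : ℕ) => ((p:ℤ))^r ∣ (y:ℤ)^2)
      = (Finset.range (p^(r/2))).image (fun t => p^s * t) := by
    ext y
    simp only [Finset.mem_filter, Finset.mem_range, Finset.mem_image, hiff]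
    constructor
    · rintro ⟨hlt, t, ht⟩
      refine ⟨t, ?_, ht.symm⟩
      have : p^s * p^(r/2) = p^r := by rw [← pow_add]; congr 1; omega
      have hps : 0 < p^s := by positivity
      nlinarith [ht ▸ hlt]
    · rintro ⟨t, htlt, rfl⟩
      have : p^s * p^(r/2) = p^r := by rw [← pow_add]; congr 1; omega
      constructor
      · calc p^s * t < p^s * p^(r/2) := by
              have : 0 < p^s := by positivity
              exact (Nat.mul_lt_mul_left this).mpr htlt
          _ = p^r := this
      · exact Dvd.intro t rfl
  rw [heq, Finset.card_image_of_injective _ (fun a b h => by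
      have hps : 0 < p^s := by positivity
      exact Nat.eq_of_mul_eq_mul_left hps h), Finset.card_range]

lemma triple_factor (s : Finset ℕ) (g : ℕ → ℕ → ℂ) :
    (∑ x₁ ∈ s, ∑ x₂ ∈ s, ∑ x₃ ∈ s, ∑ y₁ ∈ s, ∑ y₂ ∈ s, ∑ y₃ ∈ s,
      g x₁ y₁ * g x₂ y₂ * g x₃ y₃)
    = (∑ x ∈ s, ∑ y ∈ s, g x y)^3 := by
  simp only [← Finset.mul_sum, ← Finset.sum_mul]
  ring

/-- S_{p^r}(0,0) = p^{4r + 3⌊r/2⌋}·(1 − 1/p). -/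
theorem stmt11 (p : ℕ) (hp : p.Prime) (r : ℕ) (hr : 1 ≤ r) :
    expSum (p ^ r) 0 0 0 0 0 0
      = (p : ℂ) ^ (4 * r + 3 * (r / 2)) * (1 - 1 / (p : ℂ)) := by
  have hp1 : 1 < p := hp.one_lt
  set q := p ^ r with hqdef
  have hq0 : 0 < q := by positivity
  have hqC : (q:ℂ) ≠ 0 := Nat.cast_ne_zero.mpr hq0.ne'
  have hpC : (p:ℂ) ≠ 0 := Nat.cast_ne_zero.mpr (by omega)
  unfold expSum
  simp only [zero_mul, add_zero]
  have hsplit : ∀ (a x₁ x₂ x₃ y₁ y₂ y₃ : ℕ),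
      eChar q ((a:ℤ) * ((x₁:ℤ)*(y₁:ℤ)^2 + (x₂:ℤ)*(y₂:ℤ)^2 + (x₃:ℤ)*(y₃:ℤ)^2))
      = eChar q ((a:ℤ)*(x₁:ℤ)*(y₁:ℤ)^2) * eChar q ((a:ℤ)*(x₂:ℤ)*(y₂:ℤ)^2)
        * eChar q ((a:ℤ)*(x₃:ℤ)*(y₃:ℤ)^2) := by
    intro a x₁ x₂ x₃ y₁ y₂ y₃
    rw [show (a:ℤ) * ((x₁:ℤ)*(y₁:ℤ)^2 + (x₂:ℤ)*(y₂:ℤ)^2 + (x₃:ℤ)*(y₃:ℤ)^2)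
        = ((a:ℤ)*(x₁:ℤ)*(y₁:ℤ)^2 + (a:ℤ)*(x₂:ℤ)*(y₂:ℤ)^2) + (a:ℤ)*(x₃:ℤ)*(y₃:ℤ)^2 by ring,
      echar_add q hqC, echar_add q hqC]
  simp only [hsplit]
  have hinner : ∀ a ∈ (Finset.range q).filter (fun a => Nat.Coprime a q),
      (∑ x ∈ Finset.range q, ∑ y ∈ Finset.range q, eChar q ((a:ℤ)*(x:ℤ)*(y:ℤ)^2))
        = (q:ℂ) * (p:ℂ)^(r/2) := by
    intro a ha
    simp only [Finset.mem_filter, Finset.mem_range] at ha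
    have hco : IsCoprime (q:ℤ) (a:ℤ) :=
      (Nat.isCoprime_iff_coprime.mpr ha.2).symm
    rw [Finset.sum_comm]
    have step1 : ∀ y ∈ Finset.range q,
        (∑ x ∈ Finset.range q, eChar q ((a:ℤ)*(x:ℤ)*(y:ℤ)^2))
        = if (q:ℤ) ∣ (y:ℤ)^2 then (q:ℂ) else 0 := by
      intro y _
      have h1 : ∀ x : ℕ, (a:ℤ)*(x:ℤ)*(y:ℤ)^2 = ((a:ℤ)*(y:ℤ)^2) * (x:ℤ) := by
        intro x; ring
      simp only [h1]
      rw [echar_geom q hq0]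
      congr 1
      · rw [eq_iff_iff]
        constructor
        · intro h
          exact hco.dvd_of_dvd_mul_left h
        · intro h
          exact h.mul_left _
    rw [Finset.sum_congr rfl step1, Finset.sum_ite, Finset.sum_const_zero, add_zero,
      Finset.sum_const, nsmul_eq_mul]
    have : ((Finset.range q).filter (fun (y:ℕ) => (q:ℤ) ∣ (y:ℤ)^2)).card = p^(r/2) := by
      have hcast : (q:ℤ) = (p:ℤ)^r := by rw [hqdef]; push_cast; ring
      rw [hqdef]
      simp only [Nat.cast_pow]
      exact count_lemma p hp r
    rw [this]
    push_cast
    ring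
  rw [Finset.sum_congr rfl (fun a ha => by
    rw [triple_factor (Finset.range q) (fun x y => eChar q ((a:ℤ)*(x:ℤ)*(y:ℤ)^2)),
      hinner a ha])]
  rw [Finset.sum_const, nsmul_eq_mul]
  have hcard : ((Finset.range q).filter (fun a => Nat.Coprime a q)).card = q.totient := by
    rw [Nat.totient]
    congr 1
    apply Finset.filter_congr
    intro a _
    simp [Nat.coprime_comm]
  rw [hcard, hqdef, Nat.totient_prime_pow hp (by omega)]
  have hq3 : ((p^r : ℕ):ℂ) * (p:ℂ)^(r/2) = (p:ℂ)^(r + r/2) := by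
    push_cast; rw [pow_add]
  rw [hq3]
  have hexp : (4*r + 3*(r/2)) = (r-1) + 3*(r + r/2) + 1 := by omega
  rw [hexp]
  push_cast [Nat.cast_sub (by omega : 1 ≤ p)]
  rw [← pow_mul]
  rw [pow_add, pow_add]
  field_simp
  ring
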